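/- Let L be a dense subset of ℝ that is closed under addition and negation and contains ℤ. Let A be an m × n integer matrix, b ∈ ℤ^m, c ∈ ℤ^n. If there exists x ∈ L^n with Ax ≤ b and the set { cᵀx : Ax ≤ b, x ∈ L^n } is bounded above, then sup{ cᵀx : Ax ≤ b, x ∈ L^n } = sup{ cᵀx : Ax ≤ b, x ∈ ℝ^n }. -/

import Mathlib

def isInt (x : ℝ) : Prop := ∃ k : ℤ, x = (k : ℝ)

lemma isInt_intCast (k : ℤ) : isInt (k : ℝ) := ⟨k, rfl⟩

lemma isInt.add {x y : ℝ} (hx : isInt x) (hy : isInt y) : isInt (x + y) := by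
  obtain ⟨a, rfl⟩ := hx; obtain ⟨b, rfl⟩ := hy; exact ⟨a + b, by push_cast; ring⟩

lemma isInt.sub {x y : ℝ} (hx : isInt x) (hy : isInt y) : isInt (x - y) := by
  obtain ⟨a, rfl⟩ := hx; obtain ⟨b, rfl⟩ := hy; exact ⟨a - b, by push_cast; ring⟩

lemma isInt.mul {x y : ℝ} (hx : isInt x) (hy : isInt y) : isInt (x * y) := by
  obtain ⟨a, rfl⟩ := hx; obtain ⟨b, rfl⟩ := hy; exact ⟨a * b, by push_cast; ring⟩

lemma isInt.sum {ι : Type*} (s : Finset ι) (f : ι → ℝ) (h : ∀ i ∈ s, isInt (f i)) :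
    isInt (∑ i ∈ s, f i) := by
  classical
  induction s using Finset.induction with
  | empty => exact ⟨0, by simp⟩
  | insert _ _ hnot ih =>
    rw [Finset.sum_insert hnot]
    exact (h _ (Finset.mem_insert_self _ _)).add (ih fun i hi => h i (Finset.mem_insert_of_mem hi))

lemma kerSpan (n : ℕ) : ∀ (k : ℕ) (R : Fin k → Fin n → ℤ) (v : Fin n → ℝ),
    (∀ i, ∑ j, (R i j : ℝ) * v j = 0) →
    v ∈ Submodule.span ℝ {u : Fin n → ℝ | (∀ j, isInt (u j)) ∧
      ∀ i, ∑ j, (R i j : ℝ) * u j = 0} := by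
  intro k
  induction k with
  | zero =>
    intro R v _
    have h1 : Submodule.span ℝ (Set.range ⇑(Pi.basisFun ℝ (Fin n))) = ⊤ :=
      (Pi.basisFun ℝ (Fin n)).span_eq
    have h2 : Set.range ⇑(Pi.basisFun ℝ (Fin n)) ⊆
        {u : Fin n → ℝ | (∀ j, isInt (u j)) ∧ ∀ i : Fin 0, ∑ j, (R i j : ℝ) * u j = 0} := by
      rintro u ⟨i, rfl⟩
      refine ⟨fun j => ?_, fun i => i.elim0⟩
      classical
      refine ⟨if j = i then 1 else 0, ?_⟩
      rw [Pi.basisFun_apply, Pi.single_apply]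
      split <;> simp
    have := Submodule.span_mono (R := ℝ) h2
    rw [h1] at this
    exact this (Submodule.mem_top)
  | succ k ih =>
    intro R v hv
    set S := {u : Fin n → ℝ | (∀ j, isInt (u j)) ∧ ∀ i, ∑ j, (R i j : ℝ) * u j = 0} with hS
    set W := {u : Fin n → ℝ | (∀ j, isInt (u j)) ∧
      ∀ i : Fin k, ∑ j, (R i.succ j : ℝ) * u j = 0} with hW
    have hvW : v ∈ Submodule.span ℝ W := ih (fun i => R i.succ) v (fun i => hv i.succ)
    by_cases hcase : ∀ u ∈ W, ∑ j, (R 0 j : ℝ) * u j = 0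
    · refine Submodule.span_mono ?_ hvW
      rintro u ⟨hint, hker⟩
      exact ⟨hint, fun i => Fin.cases (hcase u ⟨hint, hker⟩) hker i⟩
    · push_neg at hcase
      obtain ⟨u0, hu0W, hα⟩ := hcase
      set α := ∑ j, (R 0 j : ℝ) * u0 j with hαdef
      set g : (Fin n → ℝ) →ₗ[ℝ] ℝ := ∑ j, (R 0 j : ℝ) • LinearMap.proj j with hg
      have hgapp : ∀ x : Fin n → ℝ, g x = ∑ j, (R 0 j : ℝ) * x j := by
        intro x
        simp [hg, LinearMap.sum_apply]
      set π : (Fin n → ℝ) →ₗ[ℝ] (Fin n → ℝ) := LinearMap.id - α⁻¹ • (g.smulRight u0) with hπ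
      have hπapp : ∀ x, π x = x - (α⁻¹ * g x) • u0 := by
        intro x
        simp [hπ, mul_smul]
      have hπv : π v = v := by
        rw [hπapp, hgapp, hv 0]
        simp
      have hmaps : π '' W ⊆ ↑(Submodule.span ℝ S) := by
        rintro _ ⟨u, huW, rfl⟩
        have hαint : isInt α := isInt.sum _ _ (fun j _ => (isInt_intCast (R 0 j)).mul (hu0W.1 j))
        have hguint : isInt (g u) := by
          rw [hgapp]
          exact isInt.sum _ _ (fun j _ => (isInt_intCast (R 0 j)).mul (huW.1 j))
        have key : π u = (α⁻¹ * α⁻¹) • (fun j => (α * α) * u j - (α * g u) * u0 j) := by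
          funext j
          rw [hπapp]
          have hαne : α ≠ 0 := hα
          simp only [Pi.smul_apply, Pi.sub_apply, smul_eq_mul]
          field_simp
        rw [key]
        refine Submodule.smul_mem _ _ (Submodule.subset_span ?_)
        constructor
        · intro j
          exact ((hαint.mul hαint).mul (huW.1 j)).sub ((hαint.mul hguint).mul (hu0W.1 j))
        · intro i
          have horth : ∀ (w : Fin n → ℝ), (∀ i' : Fin k, ∑ j, (R i'.succ j : ℝ) * w j = 0) →
              ∀ i : Fin (k+1), (∑ j, (R i j : ℝ) * w j = if i = 0 then ∑ j, (R 0 j : ℝ) * w j else 0) := by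
            intro w hw i
            refine Fin.cases ?_ (fun i' => ?_) i
            · simp
            · simp [Fin.succ_ne_zero, hw i']
          have h1 := horth u huW.2
          have h2 := horth u0 hu0W.2
          have expand : ∑ j, (R i j : ℝ) * ((α * α) * u j - (α * g u) * u0 j)
              = (α * α) * (∑ j, (R i j : ℝ) * u j) - (α * g u) * (∑ j, (R i j : ℝ) * u0 j) := by
            have hpt : ∀ j : Fin n, (R i j : ℝ) * ((α*α)*u j - (α*g u)*u0 j)
                = (α*α)*((R i j : ℝ)*u j) - (α*g u)*((R i j : ℝ)*u0 j) := fun j => by ring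
            simp only [hpt]
            rw [Finset.sum_sub_distrib, ← Finset.mul_sum, ← Finset.mul_sum]
          rw [expand, h1 i, h2 i]
          by_cases h0 : i = 0
          · subst h0
            rw [if_pos rfl, if_pos rfl, hgapp]
            ring
          · simp [h0]
      have : v ∈ Submodule.map π (Submodule.span ℝ W) := ⟨v, hvW, hπv⟩
      rw [Submodule.map_span] at this
      exact Submodule.span_le.mpr hmaps this



lemma dot_linear {n : ℕ} (r x0 : Fin n → ℝ) {V : Type*} (F : Finset V) (coef : V → ℝ)
    (vec : V → Fin n → ℝ) :
    ∑ j, r j * (x0 j + ∑ u ∈ F, coef u * vec u j)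
      = (∑ j, r j * x0 j) + ∑ u ∈ F, coef u * (∑ j, r j * vec u j) := by
  have h : ∀ j, r j * (x0 j + ∑ u ∈ F, coef u * vec u j)
      = r j * x0 j + ∑ u ∈ F, coef u * (r j * vec u j) := by
    intro j
    rw [mul_add, Finset.mul_sum]
    congr 1
    exact Finset.sum_congr rfl fun u _ => by ring
  rw [Finset.sum_congr rfl fun j _ => h j, Finset.sum_add_distrib]
  congr 1
  rw [Finset.sum_comm]
  exact Finset.sum_congr rfl fun u _ => (Finset.mul_sum _ _ _).symm

lemma L_zsmul (L : Set ℝ) (hadd : ∀ x ∈ L, ∀ y ∈ L, x + y ∈ L) (hneg : ∀ x ∈ L, -x ∈ L)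
    (hZ : ∀ z : ℤ, (z : ℝ) ∈ L) (γ : ℝ) (hγ : γ ∈ L) : ∀ k : ℤ, (k : ℝ) * γ ∈ L := by
  intro k
  induction k using Int.induction_on with
  | zero => simpa using hZ 0
  | succ i ih =>
    have h := hadd _ ih _ hγ
    have e : ((i + 1 : ℤ) : ℝ) * γ = (i : ℝ) * γ + γ := by push_cast; ring
    rwa [e]
  | pred i ih =>
    have h := hadd _ ih _ (hneg _ hγ)
    have e : ((-i - 1 : ℤ) : ℝ) * γ = ((-i : ℤ) : ℝ) * γ + -γ := by push_cast; ring
    rwa [e]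

set_option maxHeartbeats 2000000 in
lemma approx (L : Set ℝ) (hdense : Dense L)
    (hadd : ∀ x ∈ L, ∀ y ∈ L, x + y ∈ L) (hneg : ∀ x ∈ L, -x ∈ L)
    (hZ : ∀ z : ℤ, (z : ℝ) ∈ L)
    (m n : ℕ) (A : Matrix (Fin m) (Fin n) ℤ) (b : Fin m → ℤ) (c : Fin n → ℤ)
    (x0 : Fin n → ℝ) (hx0L : ∀ j, x0 j ∈ L)
    (hx0 : ∀ i, ∑ j, (A i j : ℝ) * x0 j ≤ (b i : ℝ))
    (y : Fin n → ℝ) (hy : ∀ i, ∑ j, (A i j : ℝ) * y j ≤ (b i : ℝ))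
    (ε : ℝ) (hε : 0 < ε) :
    ∃ z : Fin n → ℝ, (∀ j, z j ∈ L) ∧ (∀ i, ∑ j, (A i j : ℝ) * z j ≤ (b i : ℝ)) ∧
      ∑ j, (c j : ℝ) * y j - ε ≤ ∑ j, (c j : ℝ) * z j := by
  classical
  -- Feasibility predicate
  set P : (Fin n → ℝ) → Prop := fun x => ∀ i, ∑ j, (A i j : ℝ) * x j ≤ (b i : ℝ) with hP
  -- Strict rows
  set Strict : Fin m → Prop := fun i => ∃ x, P x ∧ ∑ j, (A i j : ℝ) * x j < (b i : ℝ) with hStrict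
  have hEq : ∀ i, ¬ Strict i → ∀ x, P x → ∑ j, (A i j : ℝ) * x j = (b i : ℝ) := by
    intro i hns x hx
    rcases lt_or_eq_of_le (hx i) with h | h
    · exact absurd ⟨x, hx, h⟩ hns
    · exact h
  -- witnesses
  set w : Fin m → (Fin n → ℝ) := fun i => if h : Strict i then h.choose else x0 with hw
  have hwP : ∀ i, P (w i) := by
    intro i
    rw [hw]
    dsimp only
    split
    · next h => exact h.choose_spec.1
    · exact hx0
  have hwlt : ∀ i, Strict i → ∑ j, (A i j : ℝ) * w i j < (b i : ℝ) := by
    intro i h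
    rw [hw]
    dsimp only
    rw [dif_pos h]
    exact h.choose_spec.2
  -- barycenter
  set xbar : Fin n → ℝ := fun j => ((m : ℝ) + 1)⁻¹ * (x0 j + ∑ i, (1 : ℝ) * w i j) with hxbar
  have hm1 : (0 : ℝ) < (m : ℝ) + 1 := by positivity
  have hxbar_eval : ∀ r : Fin n → ℝ, ∑ j, r j * xbar j
      = ((m : ℝ) + 1)⁻¹ * ((∑ j, r j * x0 j) + ∑ i, (1 : ℝ) * (∑ j, r j * w i j)) := by
    intro r
    rw [← dot_linear r x0 Finset.univ (fun _ => (1 : ℝ)) w, Finset.mul_sum]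
    exact Finset.sum_congr rfl fun j _ => by rw [hxbar]; ring
  have hxbarP : P xbar := by
    intro i
    rw [hxbar_eval]
    have h1 : (∑ j, (A i j : ℝ) * x0 j) + ∑ i', (1:ℝ) * (∑ j, (A i j : ℝ) * w i' j)
        ≤ (b i : ℝ) + ∑ i' : Fin m, (b i : ℝ) := by
      gcongr with i' _
      · exact hx0 i
      · rw [one_mul]; exact hwP i' i
    have h2 : (b i : ℝ) + ∑ i' : Fin m, (b i : ℝ) = ((m : ℝ) + 1) * (b i : ℝ) := by
      rw [Finset.sum_const, Finset.card_univ, Fintype.card_fin]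
      push_cast; ring
    calc ((m : ℝ) + 1)⁻¹ * ((∑ j, (A i j : ℝ) * x0 j) + ∑ i', (1:ℝ) * (∑ j, (A i j : ℝ) * w i' j))
        ≤ ((m : ℝ) + 1)⁻¹ * (((m : ℝ) + 1) * (b i : ℝ)) := by
          rw [← h2]; exact mul_le_mul_of_nonneg_left h1 (by positivity)
      _ = (b i : ℝ) := by field_simp
  have hxbarlt : ∀ i, Strict i → ∑ j, (A i j : ℝ) * xbar j < (b i : ℝ) := by
    intro i hs
    rw [hxbar_eval]
    have h1 : (∑ j, (A i j : ℝ) * x0 j) + ∑ i', (1:ℝ) * (∑ j, (A i j : ℝ) * w i' j)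
        < (b i : ℝ) + ∑ i' : Fin m, (b i : ℝ) := by
      have hsum : ∑ i', (1:ℝ) * (∑ j, (A i j : ℝ) * w i' j) < ∑ i' : Fin m, (b i : ℝ) := by
        apply Finset.sum_lt_sum (fun i' _ => by rw [one_mul]; exact hwP i' i)
        exact ⟨i, Finset.mem_univ i, by rw [one_mul]; exact hwlt i hs⟩
      have := hx0 i
      linarith
    have h2 : (b i : ℝ) + ∑ i' : Fin m, (b i : ℝ) = ((m : ℝ) + 1) * (b i : ℝ) := by
      rw [Finset.sum_const, Finset.card_univ, Fintype.card_fin]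
      push_cast; ring
    calc ((m : ℝ) + 1)⁻¹ * ((∑ j, (A i j : ℝ) * x0 j) + ∑ i', (1:ℝ) * (∑ j, (A i j : ℝ) * w i' j))
        < ((m : ℝ) + 1)⁻¹ * (((m : ℝ) + 1) * (b i : ℝ)) := by
          rw [← h2]; exact mul_lt_mul_of_pos_left h1 (by positivity)
      _ = (b i : ℝ) := by field_simp
  -- move towards the barycenter
  set d : ℝ := (∑ j, (c j : ℝ) * xbar j) - ∑ j, (c j : ℝ) * y j with hd
  set θ : ℝ := min 1 (ε / (2 * (1 + |d|))) with hθ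
  have habs : (0:ℝ) < 1 + |d| := by positivity
  have hθpos : 0 < θ := lt_min one_pos (by positivity)
  have hθ1 : θ ≤ 1 := min_le_left _ _
  have hθε : θ * (1 + |d|) ≤ ε / 2 := by
    have h1 : θ ≤ ε / (2 * (1 + |d|)) := min_le_right _ _
    calc θ * (1 + |d|) ≤ (ε / (2 * (1 + |d|))) * (1 + |d|) :=
          mul_le_mul_of_nonneg_right h1 (le_of_lt habs)
      _ = ε / 2 := by field_simp
  set y' : Fin n → ℝ := fun j => y j + θ * (xbar j - y j) with hy'
  have hAv_y' : ∀ r : Fin n → ℝ, ∑ j, r j * y' j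
      = (∑ j, r j * y j) + θ * ((∑ j, r j * xbar j) - ∑ j, r j * y j) := by
    intro r
    have h : ∀ j, r j * y' j = r j * y j + θ * (r j * xbar j - r j * y j) := by
      intro j; rw [hy']; ring
    rw [Finset.sum_congr rfl fun j _ => h j, Finset.sum_add_distrib, ← Finset.mul_sum,
      Finset.sum_sub_distrib]
  have hy'eq : ∀ i, ¬ Strict i → ∑ j, (A i j : ℝ) * y' j = (b i : ℝ) := by
    intro i hns
    rw [hAv_y', hEq i hns y hy, hEq i hns xbar hxbarP]
    ring
  have hy'lt : ∀ i, Strict i → ∑ j, (A i j : ℝ) * y' j < (b i : ℝ) := by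
    intro i hs
    rw [hAv_y']
    have h1 := hy i
    have h2 := hxbarlt i hs
    nlinarith
  have hy'P : P y' := by
    intro i
    by_cases hs : Strict i
    · exact le_of_lt (hy'lt i hs)
    · exact le_of_eq (hy'eq i hs)
  have hcy' : ∑ j, (c j : ℝ) * y j - ε / 2 ≤ ∑ j, (c j : ℝ) * y' j := by
    rw [hAv_y', ← hd]
    have h1 : -|d| ≤ d := neg_abs_le d
    nlinarith
  -- kernel representation of y' - x0
  set v : Fin n → ℝ := fun j => y' j - x0 j with hv
  set R : Fin m → Fin n → ℤ := fun i => if Strict i then 0 else A i with hR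
  have hvker : ∀ i, ∑ j, (R i j : ℝ) * v j = 0 := by
    intro i
    by_cases hs : Strict i
    · rw [hR]; simp [hs]
    · have : ∀ j, (R i j : ℝ) * v j = (A i j : ℝ) * y' j - (A i j : ℝ) * x0 j := by
        intro j; rw [hR, hv]; simp only [if_neg hs]; ring
      rw [Finset.sum_congr rfl fun j _ => this j, Finset.sum_sub_distrib,
        hy'eq i hs, hEq i hs x0 hx0]
      ring
  obtain ⟨co, hsupp, hsum⟩ := Submodule.mem_span_set.mp (kerSpan n m R v hvker)
  set F : Finset (Fin n → ℝ) := co.support with hF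
  have huS : ∀ u ∈ F, (∀ j, isInt (u j)) ∧ ∀ i, ¬ Strict i → ∑ j, (A i j : ℝ) * u j = 0 := by
    intro u hu
    obtain ⟨hint, hker⟩ := hsupp hu
    refine ⟨hint, fun i hs => ?_⟩
    have := hker i
    rw [hR] at this
    simpa [if_neg hs] using this
  have hv_eq : ∀ j, v j = ∑ u ∈ F, co u * u j := by
    intro j
    rw [← hsum]
    rw [Finsupp.sum]
    rw [Finset.sum_apply]
    exact Finset.sum_congr rfl fun u _ => rfl
  have hy'rep : ∀ j, y' j = x0 j + ∑ u ∈ F, co u * u j := by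
    intro j
    rw [← hv_eq j, hv]
    ring
  -- the constant K
  set K : ℝ := (∑ i, ∑ u ∈ F, |∑ j, (A i j : ℝ) * u j|) + (∑ u ∈ F, |∑ j, (c j : ℝ) * u j|) + 1
    with hK
  have hK1 : 1 ≤ K := by
    rw [hK]
    have h1 : (0:ℝ) ≤ ∑ i, ∑ u ∈ F, |∑ j, (A i j : ℝ) * u j| :=
      Finset.sum_nonneg fun i _ => Finset.sum_nonneg fun u _ => abs_nonneg _
    have h2 : (0:ℝ) ≤ ∑ u ∈ F, |∑ j, (c j : ℝ) * u j| :=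
      Finset.sum_nonneg fun u _ => abs_nonneg _
    linarith
  have hKpos : 0 < K := lt_of_lt_of_le one_pos hK1
  have hKA : ∀ i, ∑ u ∈ F, |∑ j, (A i j : ℝ) * u j| ≤ K := by
    intro i
    have h1 : ∑ u ∈ F, |∑ j, (A i j : ℝ) * u j| ≤ ∑ i, ∑ u ∈ F, |∑ j, (A i j : ℝ) * u j| :=
      Finset.single_le_sum (f := fun i' => ∑ u ∈ F, |∑ j, (A i' j : ℝ) * u j|)
        (fun i' _ => Finset.sum_nonneg fun u _ => abs_nonneg _) (Finset.mem_univ i)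
    have h2 : (0:ℝ) ≤ ∑ u ∈ F, |∑ j, (c j : ℝ) * u j| :=
      Finset.sum_nonneg fun u _ => abs_nonneg _
    rw [hK]; linarith
  have hKc : ∑ u ∈ F, |∑ j, (c j : ℝ) * u j| ≤ K := by
    have h1 : (0:ℝ) ≤ ∑ i, ∑ u ∈ F, |∑ j, (A i j : ℝ) * u j| :=
      Finset.sum_nonneg fun i _ => Finset.sum_nonneg fun u _ => abs_nonneg _
    rw [hK]; linarith
  -- choice of γ
  set sl : Fin m → ℝ := fun i => if Strict i then ((b i : ℝ) - ∑ j, (A i j : ℝ) * y' j) / K else 1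
    with hsl
  have hslpos : ∀ i, 0 < sl i := by
    intro i
    rw [hsl]
    dsimp only
    split
    · next hs =>
      have h := hy'lt i hs
      have : 0 < (b i : ℝ) - ∑ j, (A i j : ℝ) * y' j := by linarith
      positivity
    · exact one_pos
  set gset : Finset ℝ := insert (ε / (2 * K)) (Finset.univ.image sl) with hgset
  have hgne : gset.Nonempty := ⟨_, Finset.mem_insert_self _ _⟩
  set γ0 : ℝ := gset.min' hgne with hγ0
  have hγ0pos : 0 < γ0 := by
    rw [hγ0]
    rw [Finset.lt_min'_iff]
    intro t ht
    rw [hgset] at ht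
    rcases Finset.mem_insert.mp ht with h | h
    · subst h; positivity
    · obtain ⟨i, _, rfl⟩ := Finset.mem_image.mp h
      exact hslpos i
  have hγ0ε : γ0 ≤ ε / (2 * K) := Finset.min'_le _ _ (Finset.mem_insert_self _ _)
  have hγ0sl : ∀ i, γ0 ≤ sl i := fun i => Finset.min'_le _ _
    (Finset.mem_insert_of_mem (Finset.mem_image_of_mem sl (Finset.mem_univ i)))
  obtain ⟨γ, hγL, hγmem⟩ := hdense.exists_between hγ0pos
  obtain ⟨hγpos, hγlt⟩ := hγmem
  -- the rounded point
  set kco : (Fin n → ℝ) → ℤ := fun u => ⌊co u / γ⌋ with hkco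
  set z : Fin n → ℝ := fun j => x0 j + ∑ u ∈ F, (γ * (kco u : ℝ)) * u j with hz
  have hfloor : ∀ u, 0 ≤ co u - γ * (kco u : ℝ) ∧ co u - γ * (kco u : ℝ) ≤ γ := by
    intro u
    have h1 : (kco u : ℝ) ≤ co u / γ := Int.floor_le _
    have h2 : co u / γ < (kco u : ℝ) + 1 := Int.lt_floor_add_one _
    constructor
    · have := mul_le_mul_of_nonneg_left h1 (le_of_lt hγpos)
      rw [mul_div_cancel₀ _ (ne_of_gt hγpos)] at this
      linarith
    · have h3 := mul_lt_mul_of_pos_left h2 hγpos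
      rw [mul_div_cancel₀ _ (ne_of_gt hγpos)] at h3
      have h4 : γ * ((kco u : ℝ) + 1) = γ * (kco u : ℝ) + γ := by ring
      linarith
  -- z has coordinates in L
  have hzL : ∀ j, z j ∈ L := by
    intro j
    rw [hz]
    dsimp only
    have hrw : ∑ u ∈ F, (γ * (kco u : ℝ)) * u j = γ * ∑ u ∈ F, (kco u : ℝ) * u j := by
      rw [Finset.mul_sum]
      exact Finset.sum_congr rfl fun u _ => by ring
    obtain ⟨t, ht⟩ : isInt (∑ u ∈ F, (kco u : ℝ) * u j) :=
      isInt.sum _ _ fun u hu => (isInt_intCast (kco u)).mul ((huS u hu).1 j)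
    rw [hrw, ht, mul_comm]
    exact hadd _ (hx0L j) _ (L_zsmul L hadd hneg hZ γ hγL t)
  -- evaluations
  have hAz : ∀ r : Fin n → ℝ, ∑ j, r j * z j
      = (∑ j, r j * x0 j) + ∑ u ∈ F, (γ * (kco u : ℝ)) * (∑ j, r j * u j) := by
    intro r
    rw [hz]
    exact dot_linear r x0 F (fun u => γ * (kco u : ℝ)) (fun u => u)
  have hAy' : ∀ r : Fin n → ℝ, ∑ j, r j * y' j
      = (∑ j, r j * x0 j) + ∑ u ∈ F, co u * (∑ j, r j * u j) := by
    intro r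
    rw [Finset.sum_congr rfl fun j _ => by rw [hy'rep j]]
    exact dot_linear r x0 F co (fun u => u)
  have hdiff : ∀ r : Fin n → ℝ, ∑ j, r j * z j
      = (∑ j, r j * y' j) + ∑ u ∈ F, (γ * (kco u : ℝ) - co u) * (∑ j, r j * u j) := by
    intro r
    rw [hAz r, hAy' r, add_assoc, ← Finset.sum_add_distrib]
    congr 1
    exact Finset.sum_congr rfl fun u _ => by ring
  have hbound : ∀ r : Fin n → ℝ, |∑ u ∈ F, (γ * (kco u : ℝ) - co u) * (∑ j, r j * u j)|
      ≤ γ * ∑ u ∈ F, |∑ j, r j * u j| := by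
    intro r
    calc |∑ u ∈ F, (γ * (kco u : ℝ) - co u) * (∑ j, r j * u j)|
        ≤ ∑ u ∈ F, |(γ * (kco u : ℝ) - co u) * (∑ j, r j * u j)| :=
          Finset.abs_sum_le_sum_abs _ _
      _ ≤ ∑ u ∈ F, γ * |∑ j, r j * u j| := by
          apply Finset.sum_le_sum
          intro u hu
          rw [abs_mul]
          apply mul_le_mul_of_nonneg_right _ (abs_nonneg _)
          obtain ⟨hf1, hf2⟩ := hfloor u
          rw [abs_le]
          constructor <;> linarith
      _ = γ * ∑ u ∈ F, |∑ j, r j * u j| := (Finset.mul_sum _ _ _).symm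
  -- feasibility of z
  have hzP : ∀ i, ∑ j, (A i j : ℝ) * z j ≤ (b i : ℝ) := by
    intro i
    by_cases hs : Strict i
    · rw [hdiff]
      have h1 := hbound (fun j => (A i j : ℝ))
      have h2 : γ * ∑ u ∈ F, |∑ j, (A i j : ℝ) * u j| ≤ γ * K :=
        mul_le_mul_of_nonneg_left (hKA i) (le_of_lt hγpos)
      have h3 : γ * K < ((b i : ℝ) - ∑ j, (A i j : ℝ) * y' j) := by
        have hsl_i : sl i = ((b i : ℝ) - ∑ j, (A i j : ℝ) * y' j) / K := by
          rw [hsl]; simp [hs]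
        have h4 : γ < sl i := lt_of_lt_of_le hγlt (hγ0sl i)
        rw [hsl_i] at h4
        have := mul_lt_mul_of_pos_right h4 hKpos
        rwa [div_mul_cancel₀ _ (ne_of_gt hKpos)] at this
      have h5 := le_abs_self (∑ u ∈ F, (γ * (kco u : ℝ) - co u) * (∑ j, (A i j : ℝ) * u j))
      linarith
    · rw [hdiff]
      have hzero : ∑ u ∈ F, (γ * (kco u : ℝ) - co u) * (∑ j, (A i j : ℝ) * u j) = 0 := by
        apply Finset.sum_eq_zero
        intro u hu
        rw [(huS u hu).2 i hs, mul_zero]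
      rw [hzero, add_zero, hy'eq i hs]
  -- objective value
  have hzobj : ∑ j, (c j : ℝ) * y j - ε ≤ ∑ j, (c j : ℝ) * z j := by
    rw [hdiff]
    have h1 := hbound (fun j => (c j : ℝ))
    beta_reduce at h1
    have h2 : γ * ∑ u ∈ F, |∑ j, (c j : ℝ) * u j| ≤ γ * K :=
      mul_le_mul_of_nonneg_left hKc (le_of_lt hγpos)
    have h3 : γ * K ≤ ε / 2 := by
      have h4 : γ ≤ ε / (2 * K) := le_of_lt (lt_of_lt_of_le hγlt hγ0ε)
      have := mul_le_mul_of_nonneg_right h4 (le_of_lt hKpos)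
      have hKne : K ≠ 0 := ne_of_gt hKpos
      calc γ * K ≤ ε / (2 * K) * K := this
        _ = ε / 2 := by
          rw [div_mul_eq_mul_div, mul_comm ε K, mul_comm 2 K, mul_div_mul_left _ _ hKne]
    have h5 := neg_abs_le (∑ u ∈ F, (γ * (kco u : ℝ) - co u) * (∑ j, (c j : ℝ) * u j))
    have hE : -(ε/2) ≤ ∑ u ∈ F, (γ * (kco u : ℝ) - co u) * (∑ j, (c j : ℝ) * u j) :=
      le_trans (neg_le_neg (le_trans h1 (le_trans h2 h3))) h5
    have hcy2 : ∑ j, (c j : ℝ) * y j - ε / 2 ≤ ∑ j, (c j : ℝ) * y' j := hcy'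
    linarith [hcy2, hE]
  exact ⟨z, hzL, hzP, hzobj⟩


theorem stmt_12 (L : Set ℝ) (hdense : Dense L)
    (hadd : ∀ x ∈ L, ∀ y ∈ L, x + y ∈ L) (hneg : ∀ x ∈ L, -x ∈ L)
    (hZ : ∀ z : ℤ, (z : ℝ) ∈ L)
    (m n : ℕ) (A : Matrix (Fin m) (Fin n) ℤ) (b : Fin m → ℤ) (c : Fin n → ℤ)
    (hfeas : ∃ x : Fin n → ℝ, (∀ j, x j ∈ L) ∧ ∀ i, ∑ j, (A i j : ℝ) * x j ≤ (b i : ℝ))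
    (hbdd : BddAbove {t : ℝ | ∃ x : Fin n → ℝ, (∀ j, x j ∈ L) ∧
      (∀ i, ∑ j, (A i j : ℝ) * x j ≤ (b i : ℝ)) ∧ t = ∑ j, (c j : ℝ) * x j}) :
    sSup {t : ℝ | ∃ x : Fin n → ℝ, (∀ j, x j ∈ L) ∧
        (∀ i, ∑ j, (A i j : ℝ) * x j ≤ (b i : ℝ)) ∧ t = ∑ j, (c j : ℝ) * x j} =
      sSup {t : ℝ | ∃ x : Fin n → ℝ,
        (∀ i, ∑ j, (A i j : ℝ) * x j ≤ (b i : ℝ)) ∧ t = ∑ j, (c j : ℝ) * x j} := by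
  classical
  obtain ⟨x0, hx0L, hx0⟩ := hfeas
  set SL : Set ℝ := {t : ℝ | ∃ x : Fin n → ℝ, (∀ j, x j ∈ L) ∧
      (∀ i, ∑ j, (A i j : ℝ) * x j ≤ (b i : ℝ)) ∧ t = ∑ j, (c j : ℝ) * x j} with hSL
  set SR : Set ℝ := {t : ℝ | ∃ x : Fin n → ℝ,
      (∀ i, ∑ j, (A i j : ℝ) * x j ≤ (b i : ℝ)) ∧ t = ∑ j, (c j : ℝ) * x j} with hSR
  have hSLne : SL.Nonempty := ⟨∑ j, (c j : ℝ) * x0 j, x0, hx0L, hx0, rfl⟩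
  have key : ∀ y : Fin n → ℝ, (∀ i, ∑ j, (A i j : ℝ) * y j ≤ (b i : ℝ)) →
      ∑ j, (c j : ℝ) * y j ≤ sSup SL := by
    intro y hy
    refine le_of_forall_pos_le_add ?_
    intro ε hε
    obtain ⟨z, hzL, hzP, hzobj⟩ := approx L hdense hadd hneg hZ m n A b c x0 hx0L hx0 y hy ε hε
    have hz : ∑ j, (c j : ℝ) * z j ∈ SL := ⟨z, hzL, hzP, rfl⟩
    have hle := le_csSup hbdd hz
    linarith
  have hSRbdd : BddAbove SR := ⟨sSup SL, by rintro t ⟨x, hxP, rfl⟩; exact key x hxP⟩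
  have hSRne : SR.Nonempty := ⟨∑ j, (c j : ℝ) * x0 j, x0, hx0, rfl⟩
  apply le_antisymm
  · refine csSup_le_csSup hSRbdd hSLne ?_
    rintro t ⟨x, _, h2, h3⟩
    exact ⟨x, h2, h3⟩
  · refine csSup_le hSRne ?_
    rintro t ⟨x, hxP, rfl⟩
    exact key x hxP
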